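/- For qubit preparations with Bloch vectors S_{x0x1} ∈ ℝ³ (‖S_{x0x1}‖ ≤ 1) and measurement Bloch vectors T_y ∈ ℝ³ (‖T_y‖ ≤ 1), if the probabilities are p(0|x0x1,y) = (1 + S_{x0x1}·T_y)/2, then the witness W equals (1/4)·det[[ (S_{00}−S_{01})·T_0, (S_{10}−S_{11})·T_0 ], [ (S_{00}−S_{01})·T_1, (S_{10}−S_{11})·T_1 ]], and W = 0 whenever T_0 and T_1 are parallel. -/
import Mathlib


/-- Euclidean dot product on ℝ³. -/
def dot3 (u v : Fin 3 → ℝ) : ℝ := ∑ i, u i * v i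

/-- Bloch-vector probabilities p(0|x0x1,y) = (1 + S_{x0x1}·T_y)/2. -/
noncomputable def blochProb (S : Fin 2 → Fin 2 → Fin 3 → ℝ) (T : Fin 2 → Fin 3 → ℝ)
    (x0 x1 y : Fin 2) : ℝ :=
  (1 + dot3 (S x0 x1) (T y)) / 2

/-- The nonlinear dimension witness W. -/
noncomputable def Wwitness (S : Fin 2 → Fin 2 → Fin 3 → ℝ) (T : Fin 2 → Fin 3 → ℝ) : ℝ :=
  (blochProb S T 0 0 0 - blochProb S T 0 1 0) * (blochProb S T 1 0 1 - blochProb S T 1 1 1)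
    - (blochProb S T 1 0 0 - blochProb S T 1 1 0) * (blochProb S T 0 0 1 - blochProb S T 0 1 1)

theorem witness_bloch_formula (S : Fin 2 → Fin 2 → Fin 3 → ℝ) (T : Fin 2 → Fin 3 → ℝ)
    (hS : ∀ x0 x1, dot3 (S x0 x1) (S x0 x1) ≤ 1)
    (hT : ∀ y, dot3 (T y) (T y) ≤ 1) :
    Wwitness S T = (1/4) *
      (dot3 (fun i => S 0 0 i - S 0 1 i) (T 0) * dot3 (fun i => S 1 0 i - S 1 1 i) (T 1)
        - dot3 (fun i => S 1 0 i - S 1 1 i) (T 0) * dot3 (fun i => S 0 0 i - S 0 1 i) (T 1))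
    ∧ (∀ k : ℝ, ((∀ i, T 1 i = k * T 0 i) ∨ (∀ i, T 0 i = k * T 1 i)) → Wwitness S T = 0) := by
  constructor
  · simp only [Wwitness, blochProb, dot3, Fin.sum_univ_three]
    ring
  · intro k hk
    rcases hk with h | h <;>
    · simp only [Wwitness, blochProb, dot3, Fin.sum_univ_three, h 0, h 1, h 2]
      ring
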